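/- Telescoped consensus bound: Let W ∈ ℝ^{N×N} be symmetric, entrywise nonnegative and doubly stochastic, with eigenvalues 1 = λ₁ > λ₂ ≥ … ≥ λ_N > −1, and set λ := max(|λ₂|,|λ_N|) ∈ [0,1). Let J be the N×N all-ones matrix. Let e^{(1)},…,e^{(T)} ∈ ℝ^N be arbitrary, let x^{(0)} ∈ ℝ^N have all entries equal, and define recursively x^{(t)} = W x^{(t−1)} + e^{(t)} and x̄^{(t)} = (1/N)J x^{(t)} for t = 1,…,T. Then ((1−λ²)/2) · Σ_{t=1}^T ‖x^{(t−1)} − x̄^{(t−1)}‖₂² ≤ ((1+λ²)/(1−λ²)) · Σ_{t=1}^T ‖e^{(t)}‖₂². -/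

import Mathlib

open Finset Matrix Polynomial

lemma tcb_charpoly_diagonal {n : Type*} [DecidableEq n] [Fintype n] (d : n → ℝ) :
    (Matrix.diagonal d).charpoly = ∏ i, (X - C (d i)) := by
  have h : charmatrix (Matrix.diagonal d) = Matrix.diagonal (fun i => X - C (d i)) := by
    ext i j
    by_cases h : i = j
    · subst h; simp
    · simp [charmatrix_apply, Matrix.diagonal_apply_ne _ h]
  rw [Matrix.charpoly, h, Matrix.det_diagonal]

lemma tcb_charpoly_hermitian {n : Type*} [DecidableEq n] [Fintype n]
    {A : Matrix n n ℝ} (hA : A.IsHermitian) :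
    A.charpoly = ∏ i, (X - C (hA.eigenvalues i)) := by
  classical
  set U : Matrix n n ℝ := (hA.eigenvectorUnitary : Matrix n n ℝ) with hU
  have hUU : U * star U = 1 := (Matrix.mem_unitaryGroup_iff).mp hA.eigenvectorUnitary.2
  have hUU2 : star U * U = 1 := (Matrix.mem_unitaryGroup_iff').mp hA.eigenvectorUnitary.2
  have hofReal : (RCLike.ofReal ∘ hA.eigenvalues : n → ℝ) = hA.eigenvalues := by
    funext i; simp
  have hspec : A = U * Matrix.diagonal hA.eigenvalues * star U := by
    have := hA.spectral_theorem
    rwa [hofReal] at this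
  set D : Matrix n n ℝ := Matrix.diagonal hA.eigenvalues with hD
  have hkey : charmatrix A =
      (C : ℝ →+* ℝ[X]).mapMatrix U * charmatrix D * (C : ℝ →+* ℝ[X]).mapMatrix (star U) := by
    have hscal : (C : ℝ →+* ℝ[X]).mapMatrix U * Matrix.scalar n (X : ℝ[X]) *
        (C : ℝ →+* ℝ[X]).mapMatrix (star U) = Matrix.scalar n (X : ℝ[X]) := by
      rw [← Matrix.scalar_commute (X : ℝ[X]) (fun r => Commute.all _ _) _, mul_assoc,
        ← _root_.map_mul, hUU]
      simp
    rw [charmatrix, charmatrix, mul_sub, sub_mul, hscal, ← _root_.map_mul, ← _root_.map_mul, ← hspec]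
  have hdet : A.charpoly = D.charpoly := by
    have h2 : ((C : ℝ →+* ℝ[X]).mapMatrix U).det * ((C : ℝ →+* ℝ[X]).mapMatrix (star U)).det = 1 := by
      rw [← Matrix.det_mul, ← _root_.map_mul, hUU]
      simp
    rw [Matrix.charpoly, Matrix.charpoly, hkey, Matrix.det_mul, Matrix.det_mul]
    calc ((C : ℝ →+* ℝ[X]).mapMatrix U).det * (charmatrix D).det *
          ((C : ℝ →+* ℝ[X]).mapMatrix (star U)).det
        = (((C : ℝ →+* ℝ[X]).mapMatrix U).det * ((C : ℝ →+* ℝ[X]).mapMatrix (star U)).det) *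
          (charmatrix D).det := by ring
      _ = (charmatrix D).det := by rw [h2, one_mul]
  rw [hdet, hD, tcb_charpoly_diagonal]

noncomputable def tcbIp {N : ℕ} (z w : EuclideanSpace ℝ (Fin N)) : ℝ := inner ℝ z w

lemma tcbIp_eq {N : ℕ} (z w : EuclideanSpace ℝ (Fin N)) :
    tcbIp z w = ∑ j, z j * w j := by
  simp [tcbIp, PiLp.inner_apply, RCLike.inner_apply, conj_trivial, mul_comm]

lemma tcbIp_comm {N : ℕ} (z w : EuclideanSpace ℝ (Fin N)) : tcbIp z w = tcbIp w z := by
  rw [tcbIp_eq, tcbIp_eq]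
  exact Finset.sum_congr rfl fun j _ => mul_comm _ _

lemma tcb_parseval {N : ℕ} (b : OrthonormalBasis (Fin N) ℝ (EuclideanSpace ℝ (Fin N)))
    (x y : EuclideanSpace ℝ (Fin N)) :
    ∑ i, tcbIp x (b i) * tcbIp (b i) y = tcbIp x y :=
  b.sum_inner_mul_inner x y

lemma tcb_gap
    (N : ℕ) (hN : 1 < N) (W : Matrix (Fin N) (Fin N) ℝ)
    (hWsymm : W.IsSymm) (hW : W.IsHermitian)
    (hWrow : ∀ i, ∑ j, W i j = 1)
    (lam : ℝ) (hlam1 : lam < 1)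
    (i₀ : Fin N) (h1 : hW.eigenvalues i₀ = 1)
    (habs : ∀ i, i ≠ i₀ → |hW.eigenvalues i| ≤ lam)
    (y : Fin N → ℝ) (hy : ∑ j, y j = 0) :
    ∑ i, (W.mulVec y i) ^ 2 ≤ lam ^ 2 * ∑ i, (y i) ^ 2 := by
  classical
  set μ := hW.eigenvalues with hμ
  set v := hW.eigenvectorBasis with hv
  have hinner : ∀ (i : Fin N) (w : EuclideanSpace ℝ (Fin N)),
      tcbIp (v i) (WithLp.toLp 2 (W.mulVec w)) = μ i * tcbIp (v i) w := by
    intro i w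
    rw [tcbIp_eq, tcbIp_eq]
    have hWv : W.mulVec (v i) = μ i • (v i) := hW.mulVec_eigenvectorBasis i
    calc ∑ j, v i j * (W.mulVec w) j
        = ∑ j, ∑ k, v i j * (W j k * w k) := by
          simp [Matrix.mulVec, dotProduct, Finset.mul_sum]
      _ = ∑ k, (∑ j, W k j * v i j) * w k := by
          rw [Finset.sum_comm]
          refine Finset.sum_congr rfl fun k _ => ?_
          rw [Finset.sum_mul]
          refine Finset.sum_congr rfl fun j _ => ?_
          rw [hWsymm.apply k j]
          ring
      _ = ∑ k, (W.mulVec (v i)) k * w k := rfl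
      _ = ∑ k, (μ i * v i k) * w k := by
          rw [hWv]
          simp [Pi.smul_apply, smul_eq_mul]
      _ = μ i * ∑ k, v i k * w k := by
          rw [Finset.mul_sum]
          exact Finset.sum_congr rfl fun k _ => by ring
  set u : EuclideanSpace ℝ (Fin N) := WithLp.toLp 2 (fun _ => (1 : ℝ)) with hu
  set Y : EuclideanSpace ℝ (Fin N) := WithLp.toLp 2 y with hY
  have hWu : WithLp.toLp 2 (W.mulVec u) = u := by
    ext i
    show ∑ j, W i j * 1 = 1
    simp [hWrow i]
  have huv : ∀ i, i ≠ i₀ → tcbIp (v i) u = 0 := by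
    intro i hi
    have h := hinner i u
    rw [hWu] at h
    have hμi : μ i ≠ 1 := by
      intro hcon
      have h2 := habs i hi
      rw [hcon] at h2
      simp at h2
      linarith
    have h2 : (μ i - 1) * tcbIp (v i) u = 0 := by linarith [h]
    rcases mul_eq_zero.mp h2 with h3 | h3
    · exact absurd (by linarith : μ i = 1) hμi
    · exact h3
  have hc0 : tcbIp (v i₀) Y = 0 := by
    have hpars := tcb_parseval v u Y
    have huY : tcbIp u Y = 0 := by
      rw [tcbIp_eq]
      simpa [hu, hY] using hy
    have hsingle : ∑ i, tcbIp u (v i) * tcbIp (v i) Y = tcbIp u (v i₀) * tcbIp (v i₀) Y := by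
      refine Finset.sum_eq_single i₀ (fun i _ hi => ?_) (fun h => absurd (Finset.mem_univ _) h)
      rw [tcbIp_comm u (v i), huv i hi, zero_mul]
    have hsingle2 : ∑ i, tcbIp u (v i) * tcbIp (v i) u = tcbIp u (v i₀) * tcbIp (v i₀) u := by
      refine Finset.sum_eq_single i₀ (fun i _ hi => ?_) (fun h => absurd (Finset.mem_univ _) h)
      rw [huv i hi, mul_zero]
    have hne : tcbIp u (v i₀) ≠ 0 := by
      intro h
      have hpars2 := tcb_parseval v u u
      rw [hsingle2, h, zero_mul] at hpars2
      have huu : tcbIp u u = (N : ℝ) := by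
        rw [tcbIp_eq]
        simp [hu]
      rw [huu] at hpars2
      have hNpos : (0:ℝ) < (N:ℝ) := by positivity
      linarith
    rw [hsingle, huY] at hpars
    exact (mul_eq_zero.mp hpars).resolve_left hne
  have hYY : tcbIp Y Y = ∑ i, tcbIp (v i) Y * tcbIp (v i) Y := by
    rw [← tcb_parseval v Y Y]
    exact Finset.sum_congr rfl fun i _ => by rw [tcbIp_comm Y (v i)]
  set WY : EuclideanSpace ℝ (Fin N) := WithLp.toLp 2 (W.mulVec y) with hWY
  have hWYWY : tcbIp WY WY = ∑ i, (μ i * tcbIp (v i) Y) * (μ i * tcbIp (v i) Y) := by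
    rw [← tcb_parseval v WY WY]
    refine Finset.sum_congr rfl fun i _ => ?_
    rw [tcbIp_comm WY (v i)]
    have : tcbIp (v i) WY = μ i * tcbIp (v i) Y := hinner i Y
    rw [this]
  have hL : ∑ i, (W.mulVec y i) ^ 2 = tcbIp WY WY := by
    rw [tcbIp_eq]
    exact Finset.sum_congr rfl fun i _ => by rw [sq]
  have hR : ∑ i, (y i) ^ 2 = tcbIp Y Y := by
    rw [tcbIp_eq]
    exact Finset.sum_congr rfl fun i _ => by rw [sq]
  rw [hL, hR, hWYWY, hYY, Finset.mul_sum]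
  refine Finset.sum_le_sum fun i _ => ?_
  by_cases hi : i = i₀
  · subst hi
    rw [hc0]
    simp
  · have h := habs i hi
    have h2 : μ i ^ 2 ≤ lam ^ 2 := by
      nlinarith [sq_abs (μ i), abs_nonneg (μ i)]
    nlinarith [sq_nonneg (tcbIp (v i) Y)]

lemma tcb_step_sq (lam q a b : ℝ) (hl0 : 0 ≤ lam) (hl1 : lam < 1)
    (hq : 0 ≤ q) (ha : 0 ≤ a) (hb : 0 ≤ b) (h : a ^ 2 ≤ lam ^ 2 * q) :
    (a + b) ^ 2 ≤ (1 + lam ^ 2) / 2 * q + (1 + lam ^ 2) / (1 - lam ^ 2) * b ^ 2 := by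
  have h2 : (0:ℝ) < 1 - lam ^ 2 := by nlinarith
  rcases eq_or_lt_of_le hl0 with h0 | hpos
  · have hl : lam = 0 := h0.symm
    subst hl
    have hsq : a ^ 2 = 0 := le_antisymm (by simpa using h) (sq_nonneg a)
    have ha0 : a = 0 := by
      exact pow_eq_zero_iff two_ne_zero |>.mp hsq
    subst ha0
    norm_num
    nlinarith
  · have hpoly : 2 * lam ^ 2 * (1 - lam ^ 2) * (a + b) ^ 2 ≤
        lam ^ 2 * (1 - lam ^ 4) * q + 2 * lam ^ 2 * (1 + lam ^ 2) * b ^ 2 := by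
      nlinarith [sq_nonneg ((1 - lam ^ 2) * a - 2 * lam ^ 2 * b),
        mul_nonneg (by nlinarith : (0:ℝ) ≤ 1 - lam ^ 4)
          (by nlinarith : (0:ℝ) ≤ lam ^ 2 * q - a ^ 2)]
    have hden : (0:ℝ) < 2 * lam ^ 2 * (1 - lam ^ 2) := by positivity
    rw [← mul_le_mul_iff_right₀ hden]
    have hR : 2 * lam ^ 2 * (1 - lam ^ 2) *
        ((1 + lam ^ 2) / 2 * q + (1 + lam ^ 2) / (1 - lam ^ 2) * b ^ 2) =
        lam ^ 2 * (1 - lam ^ 4) * q + 2 * lam ^ 2 * (1 + lam ^ 2) * b ^ 2 := by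
      field_simp
      ring
    rw [hR]
    linarith [hpoly]
set_option maxHeartbeats 2000000 in
/-- Telescoped consensus bound: for a symmetric, nonnegative, doubly stochastic mixing matrix `W`
with eigenvalues `1 = λ₁ > λ₂ ≥ … ≥ λ_N > −1`, `λ = max(|λ₂|,|λ_N|)`, and iterates
`x^{(t)} = W x^{(t−1)} + e^{(t)}` started from a consensual `x^{(0)}`,
`((1−λ²)/2) Σ_{t=1}^T ‖x^{(t−1)} − x̄^{(t−1)}‖₂² ≤ ((1+λ²)/(1−λ²)) Σ_{t=1}^T ‖e^{(t)}‖₂²`. -/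
theorem telescoped_consensus_bound
    (N : ℕ) (hN : 1 < N)
    (W : Matrix (Fin N) (Fin N) ℝ)
    (hWsymm : W.IsSymm)
    (hWnonneg : ∀ i j, 0 ≤ W i j)
    (hWrow : ∀ i, ∑ j, W i j = 1)
    (hWcol : ∀ j, ∑ i, W i j = 1)
    (eig : Fin N → ℝ)
    (heig : W.charpoly = ∏ i, (Polynomial.X - Polynomial.C (eig i)))
    (hanti : Antitone eig)
    (heig1 : eig ⟨0, by omega⟩ = 1)
    (heig2 : eig ⟨1, hN⟩ < 1)
    (heiglast : -1 < eig ⟨N - 1, by omega⟩)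
    (lam : ℝ) (hlam : lam = max |eig ⟨1, hN⟩| |eig ⟨N - 1, by omega⟩|)
    (T : ℕ)
    (e : ℕ → Fin N → ℝ)
    (x : ℕ → Fin N → ℝ)
    (hx0 : ∀ i j, x 0 i = x 0 j)
    (hxrec : ∀ t : ℕ, x (t + 1) = W.mulVec (x t) + e (t + 1)) :
    ((1 - lam ^ 2) / 2)
        * ∑ t ∈ Finset.range T, ∑ i, (x t i - (N : ℝ)⁻¹ * ∑ j, x t j) ^ 2
      ≤ ((1 + lam ^ 2) / (1 - lam ^ 2)) * ∑ t ∈ Finset.Icc 1 T, ∑ i, (e t i) ^ 2 := by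
  classical
  have hNR : (0:ℝ) < (N:ℝ) := Nat.cast_pos.mpr (by omega)
  have hNne : (N:ℝ) ≠ 0 := ne_of_gt hNR
  have hW : W.IsHermitian := by
    ext i j
    simpa using hWsymm.apply i j
  set μ := hW.eigenvalues with hμdef
  set z0 : Fin N := ⟨0, by omega⟩ with hz0
  -- multiset of eigenvalues
  have hmult : Multiset.map μ Finset.univ.val = Multiset.map eig Finset.univ.val := by
    have hc : ∏ i, (Polynomial.X - Polynomial.C (μ i))
        = ∏ i, (Polynomial.X - Polynomial.C (eig i)) := by
      rw [← tcb_charpoly_hermitian hW, heig]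
    have h1 : ((Multiset.map μ Finset.univ.val).map
          (fun a => Polynomial.X - Polynomial.C a)).prod
        = ((Multiset.map eig Finset.univ.val).map
          (fun a => Polynomial.X - Polynomial.C a)).prod := by
      rw [Multiset.map_map, Multiset.map_map, ← Finset.prod_eq_multiset_prod,
        ← Finset.prod_eq_multiset_prod]
      simpa [Function.comp] using hc
    calc Multiset.map μ Finset.univ.val
        = ((Multiset.map μ Finset.univ.val).map
            (fun a => Polynomial.X - Polynomial.C a)).prod.roots :=
          (Polynomial.roots_multiset_prod_X_sub_C _).symm
      _ = ((Multiset.map eig Finset.univ.val).map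
            (fun a => Polynomial.X - Polynomial.C a)).prod.roots := by rw [h1]
      _ = Multiset.map eig Finset.univ.val := Polynomial.roots_multiset_prod_X_sub_C _
  have h1mem : (1:ℝ) ∈ Multiset.map μ Finset.univ.val := by
    rw [hmult]
    exact Multiset.mem_map.mpr ⟨z0, by simp, heig1⟩
  obtain ⟨i₀, -, hi₀⟩ := Multiset.mem_map.mp h1mem
  have hrest : Multiset.map μ (Finset.univ.val.erase i₀)
      = Multiset.map eig (Finset.univ.val.erase z0) := by
    have e1 : (Finset.univ.val : Multiset (Fin N)) = i₀ ::ₘ Finset.univ.val.erase i₀ :=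
      (Multiset.cons_erase (by simp)).symm
    have e2 : (Finset.univ.val : Multiset (Fin N)) = z0 ::ₘ Finset.univ.val.erase z0 :=
      (Multiset.cons_erase (by simp)).symm
    have hL : Multiset.map μ Finset.univ.val
        = (1:ℝ) ::ₘ Multiset.map μ (Finset.univ.val.erase i₀) := by
      conv_lhs => rw [e1]
      rw [Multiset.map_cons, hi₀]
    have hR : Multiset.map eig Finset.univ.val
        = (1:ℝ) ::ₘ Multiset.map eig (Finset.univ.val.erase z0) := by
      conv_lhs => rw [e2]
      rw [Multiset.map_cons, heig1]
    have h3 : (1:ℝ) ::ₘ Multiset.map μ (Finset.univ.val.erase i₀)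
        = (1:ℝ) ::ₘ Multiset.map eig (Finset.univ.val.erase z0) := by
      rw [← hL, ← hR, hmult]
    exact (Multiset.cons_inj_right _).mp h3
  -- bounds on lam
  have hord : (⟨1, hN⟩ : Fin N) ≤ ⟨N - 1, by omega⟩ := by
    rw [Fin.le_def]
    simp
    omega
  have hlast_le : eig ⟨N - 1, by omega⟩ ≤ eig ⟨1, hN⟩ := hanti hord
  have hA : |eig ⟨1, hN⟩| < 1 := abs_lt.mpr ⟨by linarith, heig2⟩
  have hB : |eig ⟨N - 1, by omega⟩| < 1 := abs_lt.mpr ⟨heiglast, by linarith⟩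
  have hlam1 : lam < 1 := by rw [hlam]; exact max_lt hA hB
  have hlam0 : 0 ≤ lam := hlam ▸ le_trans (abs_nonneg _) (le_max_left _ _)
  -- eigenvalue bounds
  have hbound : ∀ i : Fin N, i ≠ i₀ → |μ i| ≤ lam := by
    intro i hi
    have hmem : μ i ∈ Multiset.map eig (Finset.univ.val.erase z0) := by
      rw [← hrest]
      exact Multiset.mem_map_of_mem _ ((Multiset.mem_erase_of_ne hi).mpr (by simp))
    obtain ⟨j, hj, hje⟩ := Multiset.mem_map.mp hmem
    have hj0 : j ≠ z0 := by
      intro hcon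
      subst hcon
      exact (Multiset.Nodup.notMem_erase Finset.univ.nodup) hj
    have hjval : 1 ≤ (j : ℕ) := by
      rcases Nat.eq_zero_or_pos (j : ℕ) with h | h
      · exact absurd (Fin.ext h) hj0
      · omega
    have hle1 : eig j ≤ eig ⟨1, hN⟩ := hanti (by rw [Fin.le_def]; simpa using hjval)
    have hle2 : eig ⟨N - 1, by omega⟩ ≤ eig j := by
      refine hanti ?_
      rw [Fin.le_def]
      have := j.isLt
      simp
      omega
    rw [hlam, ← hje, abs_le]
    constructor
    · have h4 : -(max |eig ⟨1, hN⟩| |eig ⟨N - 1, by omega⟩|) ≤ -|eig ⟨N - 1, by omega⟩| := by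
        simp [le_max_right]
      calc -(max |eig ⟨1, hN⟩| |eig ⟨N - 1, by omega⟩|) ≤ -|eig ⟨N - 1, by omega⟩| := h4
        _ ≤ eig ⟨N - 1, by omega⟩ := neg_abs_le _
        _ ≤ eig j := hle2
    · calc eig j ≤ eig ⟨1, hN⟩ := hle1
        _ ≤ |eig ⟨1, hN⟩| := le_abs_self _
        _ ≤ max |eig ⟨1, hN⟩| |eig ⟨N - 1, by omega⟩| := le_max_left _ _
  -- dynamics
  set av : ℕ → ℝ := fun t => (N:ℝ)⁻¹ * ∑ j, x t j with havdef
  set Q : ℕ → ℝ := fun t => ∑ i, (x t i - av t) ^ 2 with hQdef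
  set E : ℕ → ℝ := fun t => ∑ i, (e t i) ^ 2 with hEdef
  have hysum : ∀ t, ∑ j, (x t j - av t) = 0 := by
    intro t
    rw [Finset.sum_sub_distrib, Finset.sum_const, Finset.card_univ, Fintype.card_fin,
      nsmul_eq_mul, havdef]
    field_simp
    ring
  have hQ0 : Q 0 = 0 := by
    show ∑ i, (x 0 i - av 0) ^ 2 = 0
    apply Finset.sum_eq_zero
    intro i _
    have hs : ∑ j, x 0 j = (N:ℝ) * x 0 i := by
      rw [Finset.sum_congr rfl fun j _ => hx0 j i, Finset.sum_const, Finset.card_univ,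
        Fintype.card_fin, nsmul_eq_mul]
    have : av 0 = x 0 i := by
      show (N:ℝ)⁻¹ * ∑ j, x 0 j = x 0 i
      rw [hs]
      field_simp
    rw [this]
    simp
  have hyrec : ∀ t i, x (t+1) i - av (t+1)
      = W.mulVec (fun j => x t j - av t) i
        + (e (t+1) i - (N:ℝ)⁻¹ * ∑ j, e (t+1) j) := by
    intro t i
    have hx' : ∀ k, x (t+1) k = W.mulVec (x t) k + e (t+1) k := fun k => by
      rw [hxrec t]; rfl
    have hWsum : ∑ k, W.mulVec (x t) k = ∑ j, x t j := by
      show ∑ k, ∑ j, W k j * x t j = ∑ j, x t j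
      rw [Finset.sum_comm]
      exact Finset.sum_congr rfl fun j _ => by rw [← Finset.sum_mul, hWcol j, one_mul]
    have hsum' : ∑ j, x (t+1) j = ∑ j, x t j + ∑ j, e (t+1) j := by
      rw [Finset.sum_congr rfl fun k _ => hx' k, Finset.sum_add_distrib, hWsum]
    have hav' : av (t+1) = av t + (N:ℝ)⁻¹ * ∑ j, e (t+1) j := by
      show (N:ℝ)⁻¹ * ∑ j, x (t+1) j = (N:ℝ)⁻¹ * ∑ j, x t j + (N:ℝ)⁻¹ * ∑ j, e (t+1) j
      rw [hsum', mul_add]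
    have hWy : W.mulVec (fun j => x t j - av t) i = W.mulVec (x t) i - av t := by
      show ∑ j, W i j * (x t j - av t) = (∑ j, W i j * x t j) - av t
      have : ∀ j, W i j * (x t j - av t) = W i j * x t j - W i j * av t := fun j => by ring
      rw [Finset.sum_congr rfl fun j _ => this j, Finset.sum_sub_distrib, ← Finset.sum_mul,
        hWrow i, one_mul]
    rw [hx' i, hav', hWy]
    ring
  have hQnonneg : ∀ t, 0 ≤ Q t := fun t => Finset.sum_nonneg fun i _ => sq_nonneg _
  have normsq : ∀ z : EuclideanSpace ℝ (Fin N), ‖z‖ ^ 2 = ∑ i, z i ^ 2 := by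
    intro z
    rw [EuclideanSpace.norm_eq, Real.sq_sqrt (by positivity)]
    exact Finset.sum_congr rfl fun i _ => by rw [Real.norm_eq_abs, sq_abs]
  have hstep : ∀ t, Q (t+1) ≤ (1 + lam ^ 2) / 2 * Q t
      + (1 + lam ^ 2) / (1 - lam ^ 2) * E (t+1) := by
    intro t
    set yv : Fin N → ℝ := fun j => x t j - av t with hyv
    set ev : Fin N → ℝ := fun j => e (t+1) j - (N:ℝ)⁻¹ * ∑ k, e (t+1) k with hev
    have hgap := tcb_gap N hN W hWsymm hW hWrow lam hlam1 i₀ hi₀ hbound yv (hysum t)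
    set U : EuclideanSpace ℝ (Fin N) := WithLp.toLp 2 (W.mulVec yv) with hU
    set V : EuclideanSpace ℝ (Fin N) := WithLp.toLp 2 ev with hV
    have hQsucc : Q (t+1) = ∑ i, (U i + V i) ^ 2 := by
      show ∑ i, (x (t+1) i - av (t+1)) ^ 2 = _
      exact Finset.sum_congr rfl fun i _ => by rw [hyrec t i]
    have hQUV : Q (t+1) = ‖U + V‖ ^ 2 := by
      rw [hQsucc, normsq]
      exact Finset.sum_congr rfl fun i _ => by rw [PiLp.add_apply]
    have hUsq : ‖U‖ ^ 2 ≤ lam ^ 2 * Q t := by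
      rw [normsq]
      exact hgap
    have hVQ : ‖V‖ ^ 2 ≤ E (t+1) := by
      rw [normsq]
      show ∑ i, ev i ^ 2 ≤ ∑ i, (e (t+1) i) ^ 2
      set m : ℝ := (N:ℝ)⁻¹ * ∑ k, e (t+1) k with hm
      have hsm : ∑ k, e (t+1) k = (N:ℝ) * m := by
        rw [hm]
        field_simp
      have hexp : ∑ i, ev i ^ 2 = ∑ i, (e (t+1) i) ^ 2 - (N:ℝ) * m ^ 2 := by
        have h1 : ∀ i, ev i ^ 2 = (e (t+1) i) ^ 2 - 2 * m * e (t+1) i + m ^ 2 := by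
          intro i
          show (e (t+1) i - m) ^ 2 = _
          ring
        rw [Finset.sum_congr rfl fun i _ => h1 i]
        rw [Finset.sum_add_distrib, Finset.sum_sub_distrib, ← Finset.mul_sum, hsm,
          Finset.sum_const, Finset.card_univ, Fintype.card_fin, nsmul_eq_mul]
        ring
      rw [hexp]
      nlinarith [sq_nonneg m, hNR]
    have key := tcb_step_sq lam (Q t) ‖U‖ ‖V‖ hlam0 hlam1 (hQnonneg t)
      (norm_nonneg _) (norm_nonneg _) hUsq
    have hKpos : (0:ℝ) ≤ (1 + lam ^ 2) / (1 - lam ^ 2) := by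
      have : (0:ℝ) < 1 - lam ^ 2 := by nlinarith
      positivity
    calc Q (t+1) = ‖U + V‖ ^ 2 := hQUV
      _ ≤ (‖U‖ + ‖V‖) ^ 2 := by
          have h := norm_add_le U V
          nlinarith [norm_nonneg (U + V)]
      _ ≤ (1 + lam ^ 2) / 2 * Q t + (1 + lam ^ 2) / (1 - lam ^ 2) * ‖V‖ ^ 2 := key
      _ ≤ (1 + lam ^ 2) / 2 * Q t + (1 + lam ^ 2) / (1 - lam ^ 2) * E (t+1) := by
          have := mul_le_mul_of_nonneg_left hVQ hKpos
          linarith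
  -- summation
  have hsum1 : ∑ t ∈ Finset.range T, Q (t+1)
      ≤ (1 + lam ^ 2) / 2 * ∑ t ∈ Finset.range T, Q t
        + (1 + lam ^ 2) / (1 - lam ^ 2) * ∑ t ∈ Finset.range T, E (t+1) := by
    calc ∑ t ∈ Finset.range T, Q (t+1)
        ≤ ∑ t ∈ Finset.range T,
            ((1 + lam ^ 2) / 2 * Q t + (1 + lam ^ 2) / (1 - lam ^ 2) * E (t+1)) :=
          Finset.sum_le_sum fun t _ => hstep t
      _ = _ := by rw [Finset.sum_add_distrib, ← Finset.mul_sum, ← Finset.mul_sum]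
  have htel : ∑ t ∈ Finset.range T, Q t ≤ ∑ t ∈ Finset.range T, Q (t+1) := by
    have h1 := Finset.sum_range_succ' Q T
    have h2 := Finset.sum_range_succ Q T
    have h3 := hQnonneg T
    linarith [hQ0]
  have hEshift : ∑ t ∈ Finset.range T, E (t+1) = ∑ t ∈ Finset.Icc 1 T, E t := by
    rw [← Finset.Ico_add_one_right_eq_Icc, Finset.sum_Ico_eq_sum_range]
    simp [Nat.add_comm]
  show ((1 - lam ^ 2) / 2) * ∑ t ∈ Finset.range T, Q t
      ≤ ((1 + lam ^ 2) / (1 - lam ^ 2)) * ∑ t ∈ Finset.Icc 1 T, E t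
  rw [← hEshift]
  linarith [hsum1, htel]
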